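/- arXiv:2304.08093 — 3 statements merged into one kernel-verified Lean document; each statement's English description precedes it below -/
import Mathlib

section
/- Let K = (G, M, I) be a finite formal context and n ≥ 1. There exists a surjective full scale-measure from K into the ordinal scale O_n if and only if Ext(K) is totally ordered by inclusion, ∅ ∉ Ext(K), and |Ext(K)| = n. -/
/-- The intent (common attributes) of a set of objects. -/
def intentOf {G M : Type*} (Inc : G → M → Prop) (A : Set G) : Set M :=
  {m | ∀ g ∈ A, Inc g m}

/-- The extent (common objects) of a set of attributes. -/
def extentOf {G M : Type*} (Inc : G → M → Prop) (B : Set M) : Set G :=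
  {g | ∀ m ∈ B, Inc g m}

/-- The set of extents of the formal context `(G, M, Inc)`. -/
def Extents {G M : Type*} (Inc : G → M → Prop) : Set (Set G) :=
  {A | extentOf Inc (intentOf Inc A) = A}

/-- The object closure operator `φ` of a formal context: `φ(A) = A''`. -/
def closureK {G M : Type*} (Inc : G → M → Prop) (A : Set G) : Set G :=
  extentOf Inc (intentOf Inc A)

/-- `σ` is a scale-measure from `(G,M,Inc)` into `(GS,MS,IncS)`. -/
def IsScaleMeasure {G M GS MS : Type*} (Inc : G → M → Prop) (IncS : GS → MS → Prop)
    (σ : G → GS) : Prop :=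
  ∀ A ∈ Extents IncS, σ ⁻¹' A ∈ Extents Inc

/-- `σ` is a full scale-measure from `(G,M,Inc)` into `(GS,MS,IncS)`. -/
def IsFullScaleMeasure {G M GS MS : Type*} (Inc : G → M → Prop) (IncS : GS → MS → Prop)
    (σ : G → GS) : Prop :=
  IsScaleMeasure Inc IncS σ ∧ Extents Inc = (fun A => σ ⁻¹' A) '' Extents IncS

/-- The incidence of the induced subcontext `K[H, M]`. -/
def subInc {G M : Type*} (Inc : G → M → Prop) (H : Set G) : ↥H → M → Prop :=
  fun h m => Inc h.1 m

/-- `σ : H → GS` is a local full scale-measure from `K` into `S`, i.e. a full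
scale-measure from `K[H,M]` into `S`. -/
def IsLocalFullScaleMeasure {G M GS MS : Type*} (Inc : G → M → Prop) (H : Set G)
    (IncS : GS → MS → Prop) (σ : ↥H → GS) : Prop :=
  IsFullScaleMeasure (subInc Inc H) IncS σ

/-- Nominal scale `N_n = ([n],[n],=)` (objects/attributes modelled by `Fin n`). -/
def nominalInc (n : ℕ) : Fin n → Fin n → Prop := fun a b => a = b

/-- Contranominal scale `B_n = ([n],[n],≠)`. -/
def contranominalInc (n : ℕ) : Fin n → Fin n → Prop := fun a b => a ≠ b

/-- Ordinal scale `O_n = ([n],[n],≤)`. -/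
def ordinalInc (n : ℕ) : Fin n → Fin n → Prop := fun a b => a ≤ b

/-- Interordinal scale `I_n = ([n],[n],≤) | ([n],[n],≥)`. -/
def interordinalInc (n : ℕ) : Fin n → Fin n ⊕ Fin n → Prop :=
  fun g m => Sum.elim (fun a => g ≤ a) (fun a => a ≤ g) m

/-- Crown scale `C_n = ([n],[n],J)` with `(a,b) ∈ J` iff `a = b`, `b = a+1`, or
`(a,b) = (n,1)` (here `Fin n` is `0`-indexed, so `(n,1)` becomes `(n-1,0)`). -/
def crownInc (n : ℕ) : Fin n → Fin n → Prop :=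
  fun a b => a = b ∨ (b : ℕ) = (a : ℕ) + 1 ∨ ((a : ℕ) = n - 1 ∧ (b : ℕ) = 0)

lemma subset_closureK {G M : Type*} (Inc : G → M → Prop) (A : Set G) :
    A ⊆ closureK Inc A := fun g hg m hm => hm g hg

lemma univ_mem_extents {G M : Type*} (Inc : G → M → Prop) :
    Set.univ ∈ Extents Inc :=
  Set.eq_univ_of_univ_subset (subset_closureK Inc Set.univ)

lemma ordinal_extents {n : ℕ} (hn : 1 ≤ n) :
    Extents (ordinalInc n) = Set.range (fun k : Fin n => Set.Iic k) := by
  obtain ⟨m, rfl⟩ : ∃ m, n = m + 1 := ⟨n - 1, by omega⟩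
  ext A
  constructor
  · intro hA
    rw [Extents, Set.mem_setOf_eq] at hA
    by_cases hB : (intentOf (ordinalInc (m+1)) A).Nonempty
    · obtain ⟨a, haB, hamin⟩ := Set.exists_min_image _ id (Set.toFinite _) hB
      refine ⟨a, ?_⟩
      rw [← hA]
      ext g
      simp only [Set.mem_Iic]
      constructor
      · intro h m' hm'; exact le_trans h (hamin m' hm')
      · intro h; exact h a haB
    · refine ⟨Fin.last m, ?_⟩
      rw [← hA]
      ext g
      simp only [Set.mem_Iic]
      constructor
      · intro _ m' hm'; exact absurd ⟨m', hm'⟩ hB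
      · intro _; exact Fin.le_last g
  · rintro ⟨k, rfl⟩
    rw [Extents, Set.mem_setOf_eq]
    ext g
    simp only [Set.mem_Iic]
    constructor
    · intro h
      exact h k (fun g' hg' => hg')
    · intro h m' hm'
      exact le_trans h (hm' k (le_refl k))

lemma downset_subset_of_ncard_le {G : Type*} [Finite G] {E S T : Set (Set G)}
    (hchain : IsChain (· ⊆ ·) E) (hS : S ⊆ E) (hT : T ⊆ E)
    (hSd : ∀ B ∈ S, ∀ C ∈ E, C ⊆ B → C ∈ S)
    (hTd : ∀ B ∈ T, ∀ C ∈ E, C ⊆ B → C ∈ T)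
    (h : S.ncard ≤ T.ncard) : S ⊆ T := by
  by_contra hsub
  obtain ⟨x, hxS, hxT⟩ := Set.not_subset.mp hsub
  have hTsub : T ⊆ S \ {x} := by
    intro y hyT
    have hyE := hT hyT
    have hxE := hS hxS
    have hxy : x ≠ y := fun h' => hxT (h' ▸ hyT)
    rcases hchain hxE hyE hxy with h1 | h1
    · exact absurd (hTd y hyT x hxE h1) hxT
    · exact ⟨hSd x hxS y hyE h1, fun h' => hxy (Set.mem_singleton_iff.mp h').symm⟩
  have h1 : T.ncard ≤ (S \ {x}).ncard := Set.ncard_le_ncard hTsub (Set.toFinite _)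
  have h2 : (S \ {x}).ncard < S.ncard :=
    Set.ncard_diff_singleton_lt_of_mem hxS (Set.toFinite _)
  omega


/-- Characterisation of surjective full scale-measures into the ordinal scale. -/
theorem stmt7 {G M : Type*} [Finite G] [Finite M] (Inc : G → M → Prop)
    {n : ℕ} (hn : 1 ≤ n) :
    (∃ σ : G → Fin n, Function.Surjective σ ∧ IsFullScaleMeasure Inc (ordinalInc n) σ) ↔
      (IsChain (· ⊆ ·) (Extents Inc) ∧ ∅ ∉ Extents Inc ∧ (Extents Inc).ncard = n) := by
  constructor
  · rintro ⟨σ, hsurj, hsm, hfull⟩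
    have hreflect : ∀ k k' : Fin n, σ ⁻¹' Set.Iic k ⊆ σ ⁻¹' Set.Iic k' → k ≤ k' := by
      intro k k' h
      obtain ⟨g, hg⟩ := hsurj k
      have h1 : g ∈ σ ⁻¹' Set.Iic k := by simp [Set.mem_preimage, hg]
      have h2 := h h1
      simpa [Set.mem_preimage, hg] using h2
    have hext : Extents Inc = Set.range (fun k : Fin n => σ ⁻¹' Set.Iic k) := by
      rw [hfull, ordinal_extents hn, ← Set.range_comp]
      rfl
    refine ⟨?_, ?_, ?_⟩
    · rw [hext]
      rintro _ ⟨k, rfl⟩ _ ⟨k', rfl⟩ hne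
      rcases le_total k k' with h | h
      · exact Or.inl (Set.preimage_mono (Set.Iic_subset_Iic.mpr h))
      · exact Or.inr (Set.preimage_mono (Set.Iic_subset_Iic.mpr h))
    · rw [hext]
      rintro ⟨k, hk⟩
      obtain ⟨g, hg⟩ := hsurj k
      have h1 : g ∈ σ ⁻¹' Set.Iic k := by simp [hg]
      have h2 : σ ⁻¹' Set.Iic k = ∅ := hk
      rw [h2] at h1
      exact h1
    · have hinj : Function.Injective (fun k : Fin n => σ ⁻¹' Set.Iic k) := by
        intro k k' h
        exact le_antisymm (hreflect k k' h.subset) (hreflect k' k h.superset)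
      rw [hext, ← Set.image_univ, Set.ncard_image_of_injective _ hinj, Set.ncard_univ,
        Nat.card_eq_fintype_card, Fintype.card_fin]
  · rintro ⟨hchain, hempty, hcard⟩
    classical
    set E := Extents Inc with hE
    have hfinE : E.Finite := Set.toFinite _
    set Ng : G → Set (Set G) := fun g => {A ∈ E | g ∉ A} with hNg
    set D : Set G → Set (Set G) := fun A => {B ∈ E | B ⊂ A} with hD
    have hNgE : ∀ g, Ng g ⊆ E := fun g B hB => hB.1
    have hDE : ∀ A, D A ⊆ E := fun A B hB => hB.1
    have hNgd : ∀ g, ∀ B ∈ Ng g, ∀ C ∈ E, C ⊆ B → C ∈ Ng g :=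
      fun g B hB C hC hCB => ⟨hC, fun h => hB.2 (hCB h)⟩
    have hDd : ∀ A, ∀ B ∈ D A, ∀ C ∈ E, C ⊆ B → C ∈ D A :=
      fun A B hB C hC hCB => ⟨hC, lt_of_le_of_lt hCB hB.2⟩
    have key : ∀ A ∈ E, ∀ g, (g ∈ A ↔ Ng g ⊆ D A) := by
      intro A hA g
      constructor
      · intro hg B hB
        refine ⟨hB.1, ?_⟩
        have hne : B ≠ A := fun h => hB.2 (h ▸ hg)
        rcases hchain hB.1 hA hne with h1 | h1
        · exact ssubset_of_subset_of_ne h1 hne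
        · exact absurd (h1 hg) hB.2
      · intro h
        by_contra hg
        exact (Set.ssubset_iff_subset_ne.mp (h ⟨hA, hg⟩).2).2 rfl
    have keyc : ∀ A ∈ E, ∀ g, (g ∈ A ↔ (Ng g).ncard ≤ (D A).ncard) := by
      intro A hA g
      rw [key A hA g]
      constructor
      · intro h; exact Set.ncard_le_ncard h (Set.toFinite _)
      · intro h; exact downset_subset_of_ncard_le hchain (hNgE g) (hDE A) (hNgd g) (hDd A) h
    have hrank_lt : ∀ A ∈ E, (D A).ncard < n := by
      intro A hA
      have hsub : D A ⊆ E \ {A} := by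
        intro B hB
        refine ⟨hB.1, fun h => ?_⟩
        have := hB.2
        rw [Set.mem_singleton_iff.mp h] at this
        exact (Set.ssubset_iff_subset_ne.mp this).2 rfl
      calc (D A).ncard ≤ (E \ {A}).ncard := Set.ncard_le_ncard hsub (Set.toFinite _)
        _ < E.ncard := Set.ncard_diff_singleton_lt_of_mem hA hfinE
        _ = n := hcard
    have hNg_lt : ∀ g, (Ng g).ncard < n := by
      intro g
      have hsub : Ng g ⊆ E \ {Set.univ} := by
        intro B hB
        refine ⟨hB.1, fun h => hB.2 ?_⟩
        rw [Set.mem_singleton_iff.mp h]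
        trivial
      calc (Ng g).ncard ≤ (E \ {Set.univ}).ncard := Set.ncard_le_ncard hsub (Set.toFinite _)
        _ < E.ncard := Set.ncard_diff_singleton_lt_of_mem (univ_mem_extents Inc) hfinE
        _ = n := hcard
    set σ : G → Fin n := fun g => ⟨(Ng g).ncard, hNg_lt g⟩ with hσ
    set rk : ↥E → Fin n := fun A => ⟨(D A.1).ncard, hrank_lt A.1 A.2⟩ with hrk
    have hrkinj : Function.Injective rk := by
      rintro ⟨A, hA⟩ ⟨B, hB⟩ h
      simp only [hrk, Fin.mk.injEq] at h
      by_contra hne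
      have hne' : A ≠ B := fun h' => hne (Subtype.ext h')
      have mono : ∀ X Y : Set G, X ∈ E → Y ∈ E → X ⊂ Y → (D X).ncard < (D Y).ncard := by
        intro X Y hX hY hXY
        refine Set.ncard_lt_ncard ?_ (Set.toFinite _)
        refine Set.ssubset_iff_subset_ne.mpr ⟨fun C hC => ⟨hC.1, hC.2.trans hXY⟩, fun h' => ?_⟩
        have hXX : X ∈ D X := by rw [h']; exact ⟨hX, hXY⟩
        exact (Set.ssubset_iff_subset_ne.mp hXX.2).2 rfl
      rcases hchain hA hB hne' with h1 | h1
      · have := mono A B hA hB (ssubset_of_subset_of_ne h1 hne')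
        omega
      · have := mono B A hB hA (ssubset_of_subset_of_ne h1 (Ne.symm hne'))
        omega
    have hrksurj : Function.Surjective rk := by
      have hcard' : Nat.card ↥E = Nat.card (Fin n) := by
        rw [Nat.card_coe_set_eq, hcard, Nat.card_eq_fintype_card, Fintype.card_fin]
      exact ((Nat.bijective_iff_injective_and_card rk).mpr ⟨hrkinj, hcard'⟩).2
    have hpre : ∀ (A : Set G) (hA : A ∈ E), σ ⁻¹' Set.Iic (rk ⟨A, hA⟩) = A := by
      intro A hA
      ext g
      simp only [Set.mem_preimage, Set.mem_Iic, hσ, hrk, Fin.mk_le_mk]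
      exact (keyc A hA g).symm
    have hσsurj : Function.Surjective σ := by
      intro k
      obtain ⟨⟨A, hA⟩, hAk⟩ := hrksurj k
      have hAne : A.Nonempty := Set.nonempty_iff_ne_empty.mpr (fun h => hempty (h ▸ hA))
      by_cases hDA : (D A).Nonempty
      · obtain ⟨C, hC, hCmax⟩ := Set.Finite.exists_maximalFor id (D A) (Set.toFinite _) hDA
        have hCtop : ∀ B ∈ D A, B ⊆ C := by
          intro B hB
          by_cases hBC : B = C
          · exact hBC ▸ subset_refl _
          rcases hchain (hDE A hB) (hDE A hC) hBC with h1 | h1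
          · exact h1
          · have hBC' : C = B := Set.Subset.antisymm h1 (hCmax hB h1)
            exact hBC' ▸ subset_refl _
        obtain ⟨g, hgA, hgC⟩ := Set.exists_of_ssubset hC.2
        refine ⟨g, ?_⟩
        have hNgDA : Ng g = D A := by
          apply Set.Subset.antisymm
          · exact (key A hA g).mp hgA
          · intro B hB; exact ⟨hB.1, fun h => hgC (hCtop B hB h)⟩
        apply Fin.ext
        rw [← hAk]
        simp only [hσ, hrk]
        rw [hNgDA]
      · refine ⟨hAne.some, ?_⟩
        rw [Set.not_nonempty_iff_eq_empty] at hDA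
        have h0 : Ng hAne.some = ∅ := by
          have := (key A hA _).mp hAne.some_mem
          rw [hDA] at this
          exact Set.subset_empty_iff.mp this
        apply Fin.ext
        rw [← hAk]
        simp only [hσ, hrk]
        rw [h0, hDA]
    refine ⟨σ, hσsurj, ?_, ?_⟩
    · intro A' hA'
      rw [ordinal_extents hn] at hA'
      obtain ⟨k, rfl⟩ := hA'
      obtain ⟨⟨A, hA⟩, hAk⟩ := hrksurj k
      rw [← hAk, hpre A hA]
      exact hA
    · rw [ordinal_extents hn]
      ext A
      constructor
      · intro hA
        exact ⟨Set.Iic (rk ⟨A, hA⟩), ⟨rk ⟨A, hA⟩, rfl⟩, hpre A hA⟩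
      · rintro ⟨_, ⟨k, rfl⟩, rfl⟩
        obtain ⟨⟨A, hA⟩, hAk⟩ := hrksurj k
        show σ ⁻¹' Set.Iic k ∈ E
        rw [← hAk, hpre A hA]
        exact hA
end

section
/- For every n ≥ 3, the set of extents of the crown scale C_n = ([n],[n],J), where (a,b) ∈ J iff a = b, or b = a+1, or (a,b) = (n,1), is Ext(C_n) = {∅, [n]} ∪ {{i} | i ∈ [n]} ∪ {{i, i+1} | 1 ≤ i < n} ∪ {{n, 1}}. -/
lemma my_val_add_one {n : ℕ} [NeZero n] (hn : 3 ≤ n) (a : Fin n) :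
    ((a + 1 : Fin n) : ℕ) = if (a : ℕ) + 1 = n then 0 else (a : ℕ) + 1 := by
  have h1 : ((1 : Fin n) : ℕ) = 1 := by
    rw [Fin.val_one']; exact Nat.mod_eq_of_lt (by omega)
  rw [Fin.val_add, h1]
  have ha := a.isLt
  by_cases h : (a : ℕ) + 1 = n
  · simp [h, Nat.mod_self]
  · rw [if_neg h]; exact Nat.mod_eq_of_lt (by omega)

lemma crown_iff {n : ℕ} [NeZero n] (hn : 3 ≤ n) (a b : Fin n) :
    crownInc n a b ↔ b = a ∨ b = a + 1 := by
  have hv := my_val_add_one hn a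
  have ha := a.isLt
  have hb := b.isLt
  unfold crownInc
  simp only [Fin.ext_iff, hv]
  split_ifs with h <;> omega

lemma succ_ne {n : ℕ} [NeZero n] (hn : 3 ≤ n) (a : Fin n) : a + 1 ≠ a := by
  intro h
  have hv := my_val_add_one hn a
  rw [h] at hv
  have := a.isLt
  split_ifs at hv <;> omega

lemma succ_succ_ne {n : ℕ} [NeZero n] (hn : 3 ≤ n) (a : Fin n) : a + 1 + 1 ≠ a := by
  intro h
  have hv1 := my_val_add_one hn a
  have hv2 := my_val_add_one hn (a + 1)
  rw [h] at hv2
  have := a.isLt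
  split_ifs at hv1 hv2 <;> omega

lemma my_subset_closure {G M : Type*} (Inc : G → M → Prop) (A : Set G) :
    A ⊆ extentOf Inc (intentOf Inc A) :=
  fun g hg m hm => hm g hg

lemma pair_closure {n : ℕ} [NeZero n] (hn : 3 ≤ n) (i : Fin n) :
    extentOf (crownInc n) (intentOf (crownInc n) {i, i + 1}) = {i, i + 1} := by
  apply subset_antisymm _ (my_subset_closure _ _)
  intro g hg
  have hmem : (i + 1) ∈ intentOf (crownInc n) {i, i + 1} := by
    intro x hx
    rcases hx with rfl | rfl
    · exact (crown_iff hn _ _).mpr (Or.inr rfl)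
    · exact (crown_iff hn _ _).mpr (Or.inl rfl)
  have := (crown_iff hn g (i + 1)).mp (hg _ hmem)
  rcases this with h | h
  · exact Or.inr h.symm
  · exact Or.inl (add_right_cancel h).symm

/-- Extents of the crown scale. -/
theorem stmt14 {n : ℕ} (hn : 3 ≤ n) :
    Extents (crownInc n) =
      {∅, Set.univ} ∪ {A | ∃ i : Fin n, A = {i}} ∪
        {A | ∃ i j : Fin n, (j : ℕ) = (i : ℕ) + 1 ∧ A = {i, j}} ∪
        {({⟨n - 1, by omega⟩, ⟨0, by omega⟩} : Set (Fin n))} := by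
  haveI : NeZero n := ⟨by omega⟩
  ext A
  simp only [Extents, Set.mem_setOf_eq, Set.mem_union, Set.mem_insert_iff,
    Set.mem_singleton_iff]
  constructor
  · intro hA
    by_cases hI : ∃ m, m ∈ intentOf (crownInc n) A
    · obtain ⟨m, hm⟩ := hI
      obtain ⟨p, hp⟩ : ∃ p : Fin n, p + 1 = m := ⟨m - 1, sub_add_cancel m 1⟩
      have hsub : A ⊆ {p, m} := by
        intro g hg
        rcases (crown_iff hn g m).mp (hm g hg) with h | h
        · exact Or.inr h.symm
        · exact Or.inl (add_right_cancel (h.symm.trans hp.symm))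
      by_cases hpA : p ∈ A <;> by_cases hmA : m ∈ A
      · -- A = {p, m}
        have hA2 : A = {p, m} := by
          apply subset_antisymm hsub
          intro x hx
          rcases hx with rfl | rfl
          · exact hpA
          · exact hmA
        have hv := my_val_add_one hn p
        rw [hp] at hv
        by_cases hm0 : (m : ℕ) = 0
        · right
          have hp' : p = (⟨n - 1, by omega⟩ : Fin n) := by
            apply Fin.ext
            have := p.isLt
            split_ifs at hv <;> simp <;> omega
          have hm' : m = (⟨0, by omega⟩ : Fin n) := Fin.ext hm0
          rw [hA2, hp', hm']
        · left; right
          refine ⟨p, m, ?_, hA2⟩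
          have := p.isLt
          split_ifs at hv <;> omega
      · -- A = {p}
        left; left; right
        refine ⟨p, subset_antisymm ?_ (by simpa using hpA)⟩
        intro x hx
        rcases hsub hx with rfl | rfl
        · rfl
        · exact absurd hx hmA
      · -- A = {m}
        left; left; right
        refine ⟨m, subset_antisymm ?_ (by simpa using hmA)⟩
        intro x hx
        rcases hsub hx with rfl | rfl
        · exact absurd hx hpA
        · rfl
      · -- A = ∅
        left; left; left; left
        apply Set.eq_empty_iff_forall_notMem.mpr
        intro x hx
        rcases hsub hx with rfl | rfl
        · exact hpA hx
        · exact hmA hx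
    · -- intent empty → A = univ
      push_neg at hI
      left; left; left; right
      rw [← hA]
      apply Set.eq_univ_of_forall
      intro g m' hm'
      exact absurd hm' (hI m')
  · rintro ((((h | h) | ⟨i, h⟩) | ⟨i, j, hij, h⟩) | h)
    · -- A = ∅
      subst h
      apply Set.eq_empty_iff_forall_notMem.mpr
      intro g hg
      have hmem : (g + 1 + 1) ∈ intentOf (crownInc n) (∅ : Set (Fin n)) := by
        intro x hx; exact absurd hx (Set.notMem_empty x)
      rcases (crown_iff hn g (g + 1 + 1)).mp (hg _ hmem) with h | h
      · exact succ_succ_ne hn g h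
      · exact succ_ne hn (g + 1) h
    · -- A = univ
      subst h
      apply Set.eq_univ_of_forall
      intro g m' hm'
      exfalso
      have := (crown_iff hn (m' + 1) m').mp (hm' (m' + 1) (Set.mem_univ _))
      rcases this with h | h
      · exact succ_ne hn m' h.symm
      · exact succ_succ_ne hn m' h.symm
    · -- A = {i}
      subst h
      apply subset_antisymm _ (my_subset_closure _ _)
      intro g hg
      have h1 : i ∈ intentOf (crownInc n) ({i} : Set (Fin n)) := by
        intro x hx; rw [Set.mem_singleton_iff] at hx; subst hx
        exact (crown_iff hn _ _).mpr (Or.inl rfl)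
      have h2 : (i + 1) ∈ intentOf (crownInc n) ({i} : Set (Fin n)) := by
        intro x hx; rw [Set.mem_singleton_iff] at hx; subst hx
        exact (crown_iff hn _ _).mpr (Or.inr rfl)
      have c1 := (crown_iff hn g i).mp (hg _ h1)
      have c2 := (crown_iff hn g (i + 1)).mp (hg _ h2)
      rcases c1 with h | h
      · exact h.symm
      · rcases c2 with h' | h'
        · exfalso
          rw [← h'] at h
          exact succ_succ_ne hn i h.symm
        · exact (add_right_cancel h').symm
    · -- A = {i, j} with j = i + 1
      have hj : j = i + 1 := by
        apply Fin.ext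
        rw [my_val_add_one hn i]
        have := j.isLt
        split_ifs <;> omega
      subst h; rw [hj]
      exact pair_closure hn i
    · -- special pair
      subst h
      have he : (⟨0, by omega⟩ : Fin n) = (⟨n - 1, by omega⟩ : Fin n) + 1 := by
        apply Fin.ext
        rw [my_val_add_one hn]
        simp
        omega
      rw [he]
      exact pair_closure hn _
end

section
/- Let K = (G, M, I) be a finite formal context and H ⊆ G with |H| = n ≥ 2. If there exists a bijective local full scale-measure σ : H → [n] from K into the nominal scale N_n, then for every H' ⊆ H with |H'| = k ≥ 2 there exists a bijective local full scale-measure from K (with domain H') into the nominal scale N_k. -/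
section Aux

variable {G M : Type*} (Inc : G → M → Prop)

lemma closureK_ext (A : Set G) : A ⊆ closureK Inc A := by
  intro g hg m hm; exact hm g hg

lemma closureK_mono {A B : Set G} (h : A ⊆ B) : closureK Inc A ⊆ closureK Inc B := by
  intro g hg m hm
  exact hg m (fun x hx => hm x (h hx))

lemma intentOf_closureK (A : Set G) : intentOf Inc (closureK Inc A) = intentOf Inc A := by
  ext m
  constructor
  · intro hm g hg; exact hm g (closureK_ext Inc A hg)
  · intro hm g hg; exact hg m hm

lemma closureK_idem (A : Set G) : closureK Inc (closureK Inc A) = closureK Inc A :=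
  calc closureK Inc (closureK Inc A)
      = extentOf Inc (intentOf Inc (closureK Inc A)) := rfl
    _ = extentOf Inc (intentOf Inc A) := by rw [intentOf_closureK]
    _ = closureK Inc A := rfl

/-- Membership in the extents of an induced subcontext, expressed in `G`. -/
lemma mem_extents_sub (H : Set G) (A : Set ↥H) :
    A ∈ Extents (subInc Inc H) ↔
      closureK Inc (Subtype.val '' A) ∩ H = Subtype.val '' A := by
  have hint : intentOf (subInc Inc H) A = intentOf Inc (Subtype.val '' A) := by
    ext m
    simp only [intentOf, subInc, Set.mem_setOf_eq, Set.forall_mem_image]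
  have hext : ∀ B : Set M,
      extentOf (subInc Inc H) B = Subtype.val ⁻¹' extentOf Inc B := by
    intro B; rfl
  have : A ∈ Extents (subInc Inc H) ↔
      Subtype.val ⁻¹' (closureK Inc (Subtype.val '' A)) = A := by
    unfold Extents
    rw [Set.mem_setOf_eq, hint, hext]
    rfl
  rw [this]
  constructor
  · intro hA
    conv_rhs => rw [← hA]
    rw [Set.image_preimage_eq_inter_range, Subtype.range_coe]
  · intro hA
    ext x
    simp only [Set.mem_preimage]
    constructor
    · intro hx
      have hmem : (x : G) ∈ closureK Inc (Subtype.val '' A) ∩ H := ⟨hx, x.2⟩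
      rw [hA] at hmem
      exact (Subtype.coe_injective.mem_set_image).mp hmem
    · intro hx
      exact closureK_ext Inc _ (Set.mem_image_of_mem _ hx)

/-- Characterization of extents of the nominal scale, `2 ≤ n`. -/
lemma nominal_char {n : ℕ} (hn : 2 ≤ n) (A : Set (Fin n)) :
    A ∈ Extents (nominalInc n) ↔ A = ∅ ∨ (∃ a, A = {a}) ∨ A = Set.univ := by
  have hnt : Nontrivial (Fin n) := Fin.nontrivial_iff_two_le.mpr hn
  constructor
  · intro hA
    by_cases hsub : A.Subsingleton
    · rcases hsub.eq_empty_or_singleton with h1 | ⟨a, h1⟩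
      · exact Or.inl h1
      · exact Or.inr (Or.inl ⟨a, h1⟩)
    · right; right
      rw [Set.not_subsingleton_iff] at hsub
      obtain ⟨a, ha, b, hb, hab⟩ := hsub
      have hint : intentOf (nominalInc n) A = ∅ := by
        ext m
        simp only [intentOf, Set.mem_setOf_eq, Set.mem_empty_iff_false, iff_false]
        intro hm
        exact hab ((hm a ha).trans (hm b hb).symm)
      have : extentOf (nominalInc n) (intentOf (nominalInc n) A) = Set.univ := by
        rw [hint]; ext g; simp [extentOf]
      rw [← hA]; exact this
  · rintro (rfl | ⟨a, rfl⟩ | rfl)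
    · show extentOf _ (intentOf _ (∅ : Set (Fin n))) = ∅
      have h1 : intentOf (nominalInc n) (∅ : Set (Fin n)) = Set.univ := by
        ext m; simp [intentOf]
      rw [h1]
      ext g
      simp only [extentOf, Set.mem_univ, forall_true_left, Set.mem_setOf_eq,
        Set.mem_empty_iff_false, iff_false]
      intro hg
      obtain ⟨m, hm⟩ := exists_ne g
      exact hm (show g = m from hg m).symm
    · show extentOf _ (intentOf _ ({a} : Set (Fin n))) = {a}
      have h1 : intentOf (nominalInc n) ({a} : Set (Fin n)) = {a} := by
        ext m; simp [intentOf, nominalInc, eq_comm]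
      rw [h1]
      ext g; simp [extentOf, nominalInc]
    · show extentOf _ (intentOf _ (Set.univ : Set (Fin n))) = Set.univ
      apply Set.eq_univ_of_univ_subset
      exact closureK_ext (nominalInc n) Set.univ

/-- From a bijective full scale-measure into `N_n`, extents are trivial. -/
lemma char_of_full {X : Type*} {M : Type*} (Inc2 : X → M → Prop) {n : ℕ} (hn : 2 ≤ n)
    (σ : X → Fin n) (hb : Function.Bijective σ)
    (h : IsFullScaleMeasure Inc2 (nominalInc n) σ) (A : Set X) :
    A ∈ Extents Inc2 ↔ A = ∅ ∨ (∃ x, A = {x}) ∨ A = Set.univ := by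
  constructor
  · intro hA
    rw [h.2] at hA
    obtain ⟨B, hB, rfl⟩ := hA
    rcases (nominal_char hn B).mp hB with rfl | ⟨a, rfl⟩ | rfl
    · exact Or.inl rfl
    · right; left
      obtain ⟨x, hx⟩ := hb.surjective a
      refine ⟨x, ?_⟩
      ext y
      simp only [Set.mem_preimage, Set.mem_singleton_iff, ← hx]
      exact ⟨fun hy => hb.injective hy, fun hy => by rw [hy]⟩
    · exact Or.inr (Or.inr rfl)
  · rintro (rfl | ⟨x, rfl⟩ | rfl)
    · have : (∅ : Set X) = σ ⁻¹' ∅ := by simp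
      rw [this]
      exact h.1 ∅ ((nominal_char hn ∅).mpr (Or.inl rfl))
    · have : ({x} : Set X) = σ ⁻¹' {σ x} := by
        ext y
        simp only [Set.mem_singleton_iff, Set.mem_preimage]
        exact ⟨fun hy => by rw [hy], fun hy => hb.injective hy⟩
      rw [this]
      exact h.1 {σ x} ((nominal_char hn _).mpr (Or.inr (Or.inl ⟨σ x, rfl⟩)))
    · have : (Set.univ : Set X) = σ ⁻¹' Set.univ := by simp
      rw [this]
      exact h.1 Set.univ ((nominal_char hn _).mpr (Or.inr (Or.inr rfl)))

/-- Conversely, trivial extents give a bijective full scale-measure into `N_k`. -/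
lemma full_of_char {X : Type*} {M : Type*} (Inc2 : X → M → Prop) {k : ℕ} (hk : 2 ≤ k)
    (τ : X → Fin k) (hb : Function.Bijective τ)
    (hE : ∀ A : Set X, A ∈ Extents Inc2 ↔ A = ∅ ∨ (∃ x, A = {x}) ∨ A = Set.univ) :
    IsFullScaleMeasure Inc2 (nominalInc k) τ := by
  constructor
  · intro B hB
    rcases (nominal_char hk B).mp hB with rfl | ⟨a, rfl⟩ | rfl
    · exact (hE _).mpr (Or.inl (by simp))
    · obtain ⟨x, hx⟩ := hb.surjective a
      refine (hE _).mpr (Or.inr (Or.inl ⟨x, ?_⟩))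
      ext y
      simp only [Set.mem_preimage, Set.mem_singleton_iff, ← hx]
      exact ⟨fun hy => hb.injective hy, fun hy => by rw [hy]⟩
    · exact (hE _).mpr (Or.inr (Or.inr (by simp)))
  · ext A
    rw [hE A]
    constructor
    · rintro (rfl | ⟨x, rfl⟩ | rfl)
      · exact ⟨∅, (nominal_char hk _).mpr (Or.inl rfl), by simp⟩
      · refine ⟨{τ x}, (nominal_char hk _).mpr (Or.inr (Or.inl ⟨τ x, rfl⟩)), ?_⟩
        ext y
        simp only [Set.mem_preimage, Set.mem_singleton_iff]
        exact ⟨fun hy => hb.injective hy, fun hy => by rw [hy]⟩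
      · exact ⟨Set.univ, (nominal_char hk _).mpr (Or.inr (Or.inr rfl)), by simp⟩
    · rintro ⟨B, hB, rfl⟩
      rcases (nominal_char hk B).mp hB with rfl | ⟨a, rfl⟩ | rfl
      · exact Or.inl (by simp)
      · obtain ⟨x, hx⟩ := hb.surjective a
        refine Or.inr (Or.inl ⟨x, ?_⟩)
        ext y
        simp only [Set.mem_preimage, Set.mem_singleton_iff, ← hx]
        exact ⟨fun hy => hb.injective hy, fun hy => by rw [hy]⟩
      · exact Or.inr (Or.inr (by simp))

end Aux

/-- Heredity of local full scale-measures into nominal scales. -/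
theorem stmt17 {G M : Type*} [Finite G] [Finite M] (Inc : G → M → Prop)
    (H : Set G) {n : ℕ} (hn : 2 ≤ n) (hcard : H.ncard = n)
    (σ : ↥H → Fin n) (hb : Function.Bijective σ)
    (h : IsLocalFullScaleMeasure Inc H (nominalInc n) σ) :
    ∀ H' ⊆ H, ∀ k : ℕ, 2 ≤ k → H'.ncard = k →
      ∃ τ : ↥H' → Fin k, Function.Bijective τ ∧
        IsLocalFullScaleMeasure Inc H' (nominalInc k) τ := by
  intro H' hH' k hk hcard'
  -- translate the hypothesis into a closure statement in `G`
  have hcharH : ∀ A : Set ↥H, A ∈ Extents (subInc Inc H) ↔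
      A = ∅ ∨ (∃ x, A = {x}) ∨ A = Set.univ :=
    char_of_full (subInc Inc H) hn σ hb h
  -- closure characterization for subsets of H
  have hclH : ∀ S : Set G, S ⊆ H →
      ((closureK Inc S ∩ H = S) ↔ (S = ∅ ∨ (∃ g ∈ H, S = {g}) ∨ S = H)) := by
    intro S hS
    have himg : Subtype.val '' (Subtype.val ⁻¹' S : Set ↥H) = S := by
      rw [Set.image_preimage_eq_inter_range, Subtype.range_coe,
        Set.inter_eq_left.mpr hS]
    have := (mem_extents_sub Inc H (Subtype.val ⁻¹' S)).symm.trans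
      (hcharH (Subtype.val ⁻¹' S))
    rw [himg] at this
    rw [this]
    constructor
    · rintro (he | ⟨x, hx⟩ | hu)
      · left
        rw [← himg, he, Set.image_empty]
      · right; left
        exact ⟨x.1, x.2, by rw [← himg, hx, Set.image_singleton]⟩
      · right; right
        rw [← himg, hu, Set.image_univ, Subtype.range_coe]
    · rintro (rfl | ⟨g, hg, rfl⟩ | rfl)
      · left; simp
      · right; left
        exact ⟨⟨g, hg⟩, by ext x; simp [Subtype.ext_iff]⟩
      · right; right
        ext x; simp [x.2]
  -- closure characterization for subsets of H'
  have hclH' : ∀ S : Set G, S ⊆ H' →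
      ((closureK Inc S ∩ H' = S) ↔ (S = ∅ ∨ (∃ g ∈ H', S = {g}) ∨ S = H')) := by
    intro S hS
    constructor
    · intro hcl
      set B := closureK Inc S ∩ H with hBdef
      have hSB : S ⊆ B :=
        Set.subset_inter (closureK_ext Inc S) (hS.trans hH')
      have hBH : B ⊆ H := Set.inter_subset_right
      have hBcl : closureK Inc B ∩ H = B := by
        apply Set.Subset.antisymm
        · intro x hx
          refine ⟨?_, hx.2⟩
          have h1 : closureK Inc B ⊆ closureK Inc S := by
            have := closureK_mono Inc (Set.inter_subset_left :
              closureK Inc S ∩ H ⊆ closureK Inc S)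
            rw [closureK_idem] at this
            exact this
          exact h1 hx.1
        · exact Set.subset_inter
            ((closureK_ext Inc B).trans (le_refl _)) hBH
      have hSB' : S = B ∩ H' := by
        rw [← hcl, hBdef, Set.inter_assoc,
          Set.inter_eq_right.mpr hH']
      rcases (hclH B hBH).mp hBcl with hB | ⟨g, hg, hBg⟩ | hB
      · left; rw [hSB', hB, Set.empty_inter]
      · by_cases hSe : S = ∅
        · exact Or.inl hSe
        · right; left
          obtain ⟨x, hx⟩ := Set.nonempty_iff_ne_empty.mpr hSe
          have hxg : x = g := by
            have : x ∈ B := hSB hx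
            rw [hBg] at this; exact this
          refine ⟨g, hxg ▸ hS hx, ?_⟩
          apply Set.Subset.antisymm
          · intro y hy
            have : y ∈ B := hSB hy
            rw [hBg] at this; exact this
          · intro y hy
            rw [Set.mem_singleton_iff] at hy
            rw [hy, ← hxg]; exact hx
      · right; right
        rw [hSB', hB, Set.inter_eq_right.mpr hH']
    · rintro (rfl | ⟨g, hg, rfl⟩ | rfl)
      · have he : closureK Inc (∅ : Set G) ∩ H = ∅ :=
          (hclH ∅ (Set.empty_subset H)).mpr (Or.inl rfl)
        apply Set.Subset.antisymm
        · intro x hx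
          have : x ∈ closureK Inc (∅ : Set G) ∩ H := ⟨hx.1, hH' hx.2⟩
          rw [he] at this; exact this
        · exact Set.empty_subset _
      · have hgH : ({g} : Set G) ⊆ H := by
          intro x hx; rw [Set.mem_singleton_iff] at hx; rw [hx]
          exact hH' hg
        have he : closureK Inc ({g} : Set G) ∩ H = {g} :=
          (hclH {g} hgH).mpr (Or.inr (Or.inl ⟨g, hH' hg, rfl⟩))
        apply Set.Subset.antisymm
        · intro x hx
          have : x ∈ closureK Inc ({g} : Set G) ∩ H := ⟨hx.1, hH' hx.2⟩
          rw [he] at this; exact this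
        · exact Set.subset_inter (closureK_ext Inc {g}) (by
            intro x hx; rw [Set.mem_singleton_iff] at hx; rw [hx]; exact hg)
      · exact Set.Subset.antisymm Set.inter_subset_right
          (Set.subset_inter (closureK_ext Inc _) (le_refl _))
  -- the extents of K[H',M] are trivial
  have hcharH' : ∀ A : Set ↥H', A ∈ Extents (subInc Inc H') ↔
      A = ∅ ∨ (∃ x, A = {x}) ∨ A = Set.univ := by
    intro A
    rw [mem_extents_sub]
    have hsub : (Subtype.val '' A : Set G) ⊆ H' := by
      rintro x ⟨y, hy, rfl⟩; exact y.2
    rw [hclH' _ hsub]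
    constructor
    · rintro (he | ⟨g, hg, hAg⟩ | hu)
      · left
        rwa [Set.image_eq_empty] at he
      · right; left
        refine ⟨⟨g, hg⟩, ?_⟩
        apply Set.image_injective.mpr Subtype.coe_injective
        rw [hAg, Set.image_singleton]
      · right; right
        apply Set.image_injective.mpr Subtype.coe_injective
        rw [hu, Set.image_univ, Subtype.range_coe]
    · rintro (rfl | ⟨x, rfl⟩ | rfl)
      · left; simp
      · right; left
        exact ⟨x.1, x.2, by rw [Set.image_singleton]⟩
      · right; right
        rw [Set.image_univ, Subtype.range_coe]
  -- construct the bijection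
  have hfin : H'.Finite := Set.toFinite H'
  have : Nonempty (↥H' ≃ Fin k) := by
    have h1 : Nat.card ↥H' = k := by
      rw [Nat.card_coe_set_eq, hcard']
    have : Finite ↥H' := hfin.to_subtype
    exact ⟨(Finite.equivFinOfCardEq h1)⟩
  obtain ⟨e⟩ := this
  exact ⟨e, e.bijective, full_of_char (subInc Inc H') hk e e.bijective hcharH'⟩
end
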